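/- For every k ≥ 2, the minimum size of an identifying code of A_k is exactly 2k−1. -/

import Mathlib

open SimpleGraph

/-- The closed ball of radius 1 (closed neighborhood) of `x`. -/
def ball {V : Type*} (G : SimpleGraph V) (x : V) : Set V := {y | y = x ∨ G.Adj x y}

/-- `C` separates every pair of distinct vertices. -/
def IsSeparating {V : Type*} (G : SimpleGraph V) (C : Set V) : Prop :=
  ∀ x y : V, x ≠ y → _root_.ball G x ∩ C ≠ _root_.ball G y ∩ C

/-- `C` is an identifying code of `G`. -/
def IsIdCode {V : Type*} (G : SimpleGraph V) (C : Set V) : Prop :=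
  (∀ x : V, (_root_.ball G x ∩ C).Nonempty) ∧ IsSeparating G C

/-- A graph is twin-free if distinct vertices have distinct closed neighborhoods. -/
def TwinFree {V : Type*} (G : SimpleGraph V) : Prop :=
  ∀ x y : V, _root_.ball G x = _root_.ball G y → x = y

/-- The minimum size of an identifying code. -/
noncomputable def gammaID {V : Type*} (G : SimpleGraph V) : ℕ :=
  sInf {n | ∃ C : Set V, IsIdCode G C ∧ C.ncard = n}

/-- The minimum size of a separating set. -/
noncomputable def gammaS {V : Type*} (G : SimpleGraph V) : ℕ :=
  sInf {n | ∃ C : Set V, IsSeparating G C ∧ C.ncard = n}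

/-- The graph `A_k` on vertices `x_1,…,x_{2k}` (indexed `0,…,2k-1`):
`x_i` adjacent to `x_j` iff `i ≠ j` and `|i - j| ≤ k - 1`. -/
def Agraph (k : ℕ) : SimpleGraph (Fin (2 * k)) where
  Adj i j := i ≠ j ∧ ((i : ℤ) - (j : ℤ)).natAbs ≤ k - 1
  symm := by
    refine ⟨?_⟩
    intro i j h
    refine ⟨h.1.symm, ?_⟩
    have : ((j : ℤ) - (i : ℤ)).natAbs = ((i : ℤ) - (j : ℤ)).natAbs := by
      rw [← Int.natAbs_neg]; ring_nf
    omega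
  loopless := by refine ⟨?_⟩; intro i h; exact h.1 rfl

/-- The join of two graphs. -/
def joinG {α β : Type*} (G₁ : SimpleGraph α) (G₂ : SimpleGraph β) : SimpleGraph (α ⊕ β) where
  Adj x y := match x, y with
    | Sum.inl a, Sum.inl b => G₁.Adj a b
    | Sum.inr a, Sum.inr b => G₂.Adj a b
    | _, _ => True
  symm := by refine ⟨?_⟩; rintro (a | a) (b | b) h <;> first | exact h.symm | trivial
  loopless := by
    refine ⟨?_⟩
    rintro (a | a) h
    · exact G₁.irrefl h
    · exact G₂.irrefl h

/-- The star `K_{1,t}`: vertex `0` is the center, adjacent to all other vertices. -/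
def starGraph (t : ℕ) : SimpleGraph (Fin (t + 1)) where
  Adj i j := i ≠ j ∧ (i = 0 ∨ j = 0)
  symm := by refine ⟨?_⟩; rintro i j ⟨h1, h2⟩; exact ⟨h1.symm, h2.symm⟩
  loopless := by refine ⟨?_⟩; rintro i ⟨h1, _⟩; exact h1 rfl


lemma agraph_ball {k : ℕ} (hk : 1 ≤ k) (x y : Fin (2*k)) :
    y ∈ _root_.ball (Agraph k) x ↔ ((x:ℕ) ≤ (y:ℕ) + (k-1) ∧ (y:ℕ) ≤ (x:ℕ) + (k-1)) := by
  simp only [_root_.ball, Agraph, Set.mem_setOf_eq, ne_eq, Fin.ext_iff]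
  omega

theorem stmt7 (k : ℕ) (hk : 2 ≤ k) : gammaID (Agraph k) = 2 * k - 1 := by
  have hk1 : 1 ≤ k := by omega
  have hball := fun x y => agraph_ball (k := k) hk1 x y
  -- witness code
  set C₀ : Set (Fin (2*k)) := {i : Fin (2*k) | (i:ℕ) < 2*k - 1} with hC₀
  have hC₀mem : ∀ i : Fin (2*k), i ∈ C₀ ↔ (i:ℕ) < 2*k - 1 := fun i => Iff.rfl
  have hcode : IsIdCode (Agraph k) C₀ := by
    constructor
    · intro x
      by_cases hx : (x:ℕ) = 2*k - 1
      · exact ⟨⟨2*k-2, by omega⟩, (hball x _).mpr (by simp only [Fin.val_mk]; omega),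
          by simp only [hC₀mem, Fin.val_mk]; omega⟩
      · exact ⟨x, (hball x x).mpr (by omega), by
          have := x.isLt; simp only [hC₀mem]; omega⟩
    · have key : ∀ x y : Fin (2*k), (x:ℕ) < (y:ℕ) →
          _root_.ball (Agraph k) x ∩ C₀ ≠ _root_.ball (Agraph k) y ∩ C₀ := by
        intro x y hlt heq
        have hxlt := x.isLt; have hylt := y.isLt
        by_cases hy : (y:ℕ) ≤ k - 1
        · -- witness w = y + k - 1 ∈ B(y) ∩ C₀, ∉ B(x)
          have hw : (⟨(y:ℕ) + k - 1, by omega⟩ : Fin (2*k)) ∈ _root_.ball (Agraph k) y ∩ C₀ :=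
            ⟨(hball y _).mpr (by simp only [Fin.val_mk]; omega),
             by simp only [hC₀mem, Fin.val_mk]; omega⟩
          rw [← heq] at hw
          have := (hball x _).mp hw.1
          simp only [Fin.val_mk] at this
          omega
        · -- witness w = x + 1 - k ∈ B(x) ∩ C₀, ∉ B(y)
          have hw : (⟨(x:ℕ) + 1 - k, by omega⟩ : Fin (2*k)) ∈ _root_.ball (Agraph k) x ∩ C₀ :=
            ⟨(hball x _).mpr (by simp only [Fin.val_mk]; omega),
             by simp only [hC₀mem, Fin.val_mk]; omega⟩
          rw [heq] at hw
          have := (hball y _).mp hw.1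
          simp only [Fin.val_mk] at this
          omega
      intro x y hxy
      rcases lt_or_gt_of_ne (fun h : (x:ℕ) = (y:ℕ) => hxy (Fin.ext h)) with h | h
      · exact key x y h
      · exact (key y x h).symm
  have hcard : C₀.ncard = 2*k - 1 := by
    have hcompl : C₀ᶜ = ({⟨2*k-1, by omega⟩} : Set (Fin (2*k))) := by
      ext z
      simp only [Set.mem_compl_iff, hC₀mem, Set.mem_singleton_iff, Fin.ext_iff, Fin.val_mk]
      have := z.isLt; omega
    have h1 := Set.ncard_add_ncard_compl C₀
    rw [hcompl, Set.ncard_singleton, Nat.card_eq_fintype_card, Fintype.card_fin] at h1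
    omega
  apply le_antisymm
  · exact Nat.sInf_le ⟨C₀, hcode, hcard⟩
  · have hmem : (2*k - 1) ∈ {n | ∃ C : Set (Fin (2*k)), IsIdCode (Agraph k) C ∧ C.ncard = n} :=
      ⟨C₀, hcode, hcard⟩
    apply le_csInf ⟨_, hmem⟩
    rintro n ⟨C, ⟨hcov, hsep⟩, rfl⟩
    -- Claim 1: middle vertices must be in C
    have claim1 : ∀ j : Fin (2*k), 1 ≤ (j:ℕ) → (j:ℕ) ≤ 2*k - 2 → j ∈ C := by
      intro j hj1 hj2
      by_contra hj
      rcases le_or_gt k (j:ℕ) with hkj | hkj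
      · refine hsep ⟨(j:ℕ) - k, by omega⟩ ⟨(j:ℕ) - k + 1, by omega⟩
          (by simp [Fin.ext_iff]) ?_
        ext z
        have hzlt := z.isLt
        simp only [Set.mem_inter_iff, hball, Fin.val_mk]
        by_cases hzj : z = j
        · subst hzj; simp [hj]
        · have hz' : (z:ℕ) ≠ (j:ℕ) := fun h => hzj (Fin.ext h)
          constructor <;> rintro ⟨h1, h2⟩ <;> exact ⟨by omega, h2⟩
      · refine hsep ⟨(j:ℕ) + k - 1, by omega⟩ ⟨(j:ℕ) + k, by omega⟩
          (by simp only [ne_eq, Fin.ext_iff, Fin.val_mk]; omega) ?_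
        ext z
        have hzlt := z.isLt
        simp only [Set.mem_inter_iff, hball, Fin.val_mk]
        by_cases hzj : z = j
        · subst hzj; simp [hj]
        · have hz' : (z:ℕ) ≠ (j:ℕ) := fun h => hzj (Fin.ext h)
          constructor <;> rintro ⟨h1, h2⟩ <;> exact ⟨by omega, h2⟩
    -- Claim 2: 0 ∈ C or 2k-1 ∈ C
    have claim2 : (⟨0, by omega⟩ : Fin (2*k)) ∈ C ∨ (⟨2*k-1, by omega⟩ : Fin (2*k)) ∈ C := by
      by_contra h
      push_neg at h
      obtain ⟨h0, hl⟩ := h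
      refine hsep ⟨k - 1, by omega⟩ ⟨k, by omega⟩ (by simp [Fin.ext_iff]; omega) ?_
      ext z
      have hzlt := z.isLt
      simp only [Set.mem_inter_iff, hball, Fin.val_mk]
      by_cases hz0 : (z:ℕ) = 0
      · have hzC : z ∉ C := by
          rw [show z = (⟨0, by omega⟩ : Fin (2*k)) from Fin.ext hz0]; exact h0
        simp [hzC]
      · by_cases hzl : (z:ℕ) = 2*k - 1
        · have hzC : z ∉ C := by
            rw [show z = (⟨2*k-1, by omega⟩ : Fin (2*k)) from Fin.ext hzl]; exact hl
          simp [hzC]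
        · constructor <;> rintro ⟨h1, h2⟩ <;> exact ⟨by omega, h2⟩
    -- conclude
    have hsub : ∃ v : Fin (2*k), Cᶜ ⊆ {v} := by
      rcases claim2 with h0 | hl
      · refine ⟨⟨2*k-1, by omega⟩, fun z hz => ?_⟩
        have hzlt := z.isLt
        simp only [Set.mem_singleton_iff, Fin.ext_iff, Fin.val_mk]
        by_contra hne
        rcases Nat.eq_zero_or_pos (z:ℕ) with h | h
        · exact hz (by rw [show z = (⟨0, by omega⟩ : Fin (2*k)) from Fin.ext h]; exact h0)
        · exact hz (claim1 z h (by omega))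
      · refine ⟨⟨0, by omega⟩, fun z hz => ?_⟩
        have hzlt := z.isLt
        simp only [Set.mem_singleton_iff, Fin.ext_iff, Fin.val_mk]
        by_contra hne
        by_cases h : (z:ℕ) = 2*k - 1
        · exact hz (by rw [show z = (⟨2*k-1, by omega⟩ : Fin (2*k)) from Fin.ext h]; exact hl)
        · exact hz (claim1 z (by omega) (by omega))
    obtain ⟨v, hv⟩ := hsub
    have h1 := Set.ncard_add_ncard_compl C
    rw [Nat.card_eq_fintype_card, Fintype.card_fin] at h1
    have h2 : Cᶜ.ncard ≤ ({v} : Set (Fin (2*k))).ncard :=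
      Set.ncard_le_ncard hv (Set.finite_singleton v)
    rw [Set.ncard_singleton] at h2
    omega
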